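/- A row contraction T = [T₁,…,Tₙ] is pure (i.e., SOT-lim_k Σ_{|α|=k} T_α T_α* = 0) if and only if the Poisson kernel K_T : H → F²(Hₙ) ⊗ D_T, K_T h := Σ_α e_α ⊗ Δ_T T_α* h, is an isometry. -/

import Mathlib

open ContinuousLinearMap Filter

/-- For a word `α` in the free semigroup on `n` generators, `wordProd T α` is the
corresponding product `T_{i₁} ∘ ⋯ ∘ T_{i_k}` (the empty word gives the identity). -/
noncomputable def wordProd {H : Type*} [NormedAddCommGroup H] [NormedSpace ℂ H]
    {n : ℕ} (T : Fin n → H →L[ℂ] H) (α : List (Fin n)) : H →L[ℂ] H :=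
  (α.map T).prod

section Aux
open RCLike
open scoped InnerProductSpace ENNReal NNReal

variable {H : Type*} [NormedAddCommGroup H] [InnerProductSpace ℂ H] [CompleteSpace H]

lemma norm_sq_le_of_isPositive {P : H →L[ℂ] H} (hP : P.IsPositive) (h : H) :
    ‖P h‖ ^ 2 ≤ ‖P‖ * re ⟪P h, h⟫_ℂ := by
  set a : ℝ := re ⟪P h, h⟫_ℂ with ha
  set b : ℝ := ‖P h‖ ^ 2 with hb
  set c : ℝ := re ⟪P (P h), P h⟫_ℂ with hc
  have hsa : adjoint P = P := hP.isSelfAdjoint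
  have ha0 : 0 ≤ a := hP.re_inner_nonneg_left h
  have hb0 : 0 ≤ b := by positivity
  have hcb : c ≤ ‖P‖ * b := by
    calc re ⟪P (P h), P h⟫_ℂ ≤ ‖⟪P (P h), P h⟫_ℂ‖ := re_le_norm _
      _ ≤ ‖P (P h)‖ * ‖P h‖ := norm_inner_le_norm _ _
      _ ≤ (‖P‖ * ‖P h‖) * ‖P h‖ := by gcongr; exact P.le_opNorm _
      _ = ‖P‖ * b := by rw [hb]; ring
  have hcross := adjoint_inner_left P h (P h)
  rw [hsa] at hcross
  have hquad : ∀ t : ℝ, 0 ≤ c * (t * t) + (2 * b) * t + a := by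
    intro t
    have h0 := hP.re_inner_nonneg_left (h + (t : ℂ) • P h)
    have hC : ⟪P (h + (t : ℂ) • P h), h + (t : ℂ) • P h⟫_ℂ
        = ⟪P h, h⟫_ℂ + (t : ℂ) * (((2 : ℝ) * b : ℝ) : ℂ)
          + ((t * t : ℝ) : ℂ) * ⟪P (P h), P h⟫_ℂ := by
      simp only [map_add, map_smul, inner_add_left, inner_add_right, inner_smul_left,
        inner_smul_right, conj_ofReal, Complex.conj_ofReal, Complex.coe_algebraMap, hcross, @inner_self_eq_norm_sq_to_K ℂ]
      rw [hb]
      push_cast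
      ring
    rw [hC] at h0
    simp only [RCLike.re_to_complex, Complex.add_re, Complex.mul_re, Complex.ofReal_re,
      Complex.ofReal_im] at h0
    rw [ha, hc]
    simp only [RCLike.re_to_complex]
    nlinarith [h0]
  have hdisc := discrim_le_zero hquad
  rw [discrim] at hdisc
  have hkey : b ^ 2 ≤ c * a := by nlinarith
  rcases eq_or_lt_of_le hb0 with hb' | hb'
  · nlinarith [norm_nonneg P]
  · nlinarith


variable {n : ℕ}

omit [CompleteSpace H] in
lemma wordProd_snoc (T : Fin n → H →L[ℂ] H) {m : ℕ} (f : Fin m → Fin n) (i : Fin n) :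
    wordProd T (List.ofFn (Fin.snoc f i)) = wordProd T (List.ofFn f) * T i := by
  rw [List.ofFn_succ']
  simp only [Fin.snoc_castSucc, Fin.snoc_last, List.concat_eq_append]
  simp [wordProd, List.prod_append]

end Aux

section Main

open RCLike
open scoped InnerProductSpace ENNReal NNReal

set_option maxHeartbeats 1000000 in
/-- A row contraction is pure iff its Poisson kernel is an isometry.
Here `F²(Hₙ) ⊗ D_T` is realized as `ℓ²(𝔽ₙ⁺, D_T)`, words being lists over `Fin n`,
and the Poisson kernel is the operator `K` with coordinates `(K h) α = Δ_T T_α* h`. -/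
theorem pure_iff_poisson_kernel_isometry
    {H : Type*} [NormedAddCommGroup H] [InnerProductSpace ℂ H] [CompleteSpace H]
    {n : ℕ} (T : Fin n → H →L[ℂ] H)
    (hrow : (1 - ∑ i, T i * adjoint (T i)).IsPositive)
    (Δ : H →L[ℂ] H) (hΔpos : Δ.IsPositive)
    (hΔ : Δ * Δ = 1 - ∑ i, T i * adjoint (T i)) :
    letI D : Submodule ℂ H := (LinearMap.range Δ.toLinearMap).topologicalClosure
    letI : CompleteSpace D :=
      (LinearMap.range Δ.toLinearMap).isClosed_topologicalClosure.completeSpace_coe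
    ∀ K : H →L[ℂ] lp (fun _ : List (Fin n) => D) 2,
      (∀ (h : H) (α : List (Fin n)),
        ((K h : lp (fun _ : List (Fin n) => D) 2) α : H)
          = Δ (adjoint (wordProd T α) h)) →
      ((∀ h : H, Tendsto
          (fun k : ℕ => (∑ f : Fin k → Fin n,
            wordProd T (List.ofFn f) * adjoint (wordProd T (List.ofFn f))) h)
          atTop (nhds 0))
        ↔ Isometry K) := by
  intro K hK
  set C : H →L[ℂ] H := ∑ i, T i * adjoint (T i) with hC
  set Q : ℕ → H →L[ℂ] H := fun k => ∑ f : Fin k → Fin n,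
      wordProd T (List.ofFn f) * adjoint (wordProd T (List.ofFn f)) with hQ
  have hΔsa : adjoint Δ = Δ := hΔpos.isSelfAdjoint
  have hΔΔpos : (Δ * Δ).IsPositive := hΔ ▸ hrow
  have hQ0 : Q 0 = 1 := by
    simp only [hQ]
    rw [Fintype.sum_unique]
    simp [wordProd, ← star_eq_adjoint]
  have hQsucc : ∀ k, Q (k + 1) = ∑ f : Fin k → Fin n,
      wordProd T (List.ofFn f) * C * adjoint (wordProd T (List.ofFn f)) := by
    intro k
    simp only [hQ]
    calc (∑ g : Fin (k+1) → Fin n,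
          wordProd T (List.ofFn g) * adjoint (wordProd T (List.ofFn g)))
        = ∑ p : Fin n × (Fin k → Fin n),
            wordProd T (List.ofFn (Fin.snoc p.2 p.1)) *
              adjoint (wordProd T (List.ofFn (Fin.snoc p.2 p.1))) :=
        (Fintype.sum_equiv (Fin.snocEquiv (fun _ => Fin n)) _ _ (fun p => rfl)).symm
      _ = ∑ p : Fin n × (Fin k → Fin n),
            wordProd T (List.ofFn p.2) * (T p.1 * adjoint (T p.1)) *
              adjoint (wordProd T (List.ofFn p.2)) := by
          refine Finset.sum_congr rfl fun p _ => ?_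
          rw [wordProd_snoc]
          simp only [← star_eq_adjoint, star_mul]
          noncomm_ring
      _ = ∑ i : Fin n, ∑ f : Fin k → Fin n,
            wordProd T (List.ofFn f) * (T i * adjoint (T i)) *
              adjoint (wordProd T (List.ofFn f)) := Fintype.sum_prod_type _
      _ = ∑ f : Fin k → Fin n, ∑ i : Fin n,
            wordProd T (List.ofFn f) * (T i * adjoint (T i)) *
              adjoint (wordProd T (List.ofFn f)) := Finset.sum_comm
      _ = ∑ f : Fin k → Fin n,
            wordProd T (List.ofFn f) * C * adjoint (wordProd T (List.ofFn f)) := by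
          refine Finset.sum_congr rfl fun f _ => ?_
          rw [hC]
          simp only [Finset.mul_sum, Finset.sum_mul]
  have hdd : ∀ x : H, ⟪Δ (Δ x), x⟫_ℂ = ⟪Δ x, Δ x⟫_ℂ := by
    intro x
    have := adjoint_inner_left Δ x (Δ x)
    rwa [hΔsa] at this
  have hdiff : ∀ (h : H) (k : ℕ), re ⟪Q k h, h⟫_ℂ - re ⟪Q (k+1) h, h⟫_ℂ
      = ∑ f : Fin k → Fin n, ‖Δ (adjoint (wordProd T (List.ofFn f)) h)‖ ^ 2 := by
    intro h k
    have e1 : Q k - Q (k+1) = ∑ f : Fin k → Fin n,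
        wordProd T (List.ofFn f) * (Δ * Δ) * adjoint (wordProd T (List.ofFn f)) := by
      rw [hQsucc k]
      simp only [hQ]
      rw [← Finset.sum_sub_distrib]
      refine Finset.sum_congr rfl fun f _ => ?_
      rw [hΔ]
      noncomm_ring
    have e2 : re ⟪(Q k - Q (k+1)) h, h⟫_ℂ
        = ∑ f : Fin k → Fin n, ‖Δ (adjoint (wordProd T (List.ofFn f)) h)‖ ^ 2 := by
      rw [e1, ContinuousLinearMap.sum_apply, sum_inner, map_sum]
      refine Finset.sum_congr rfl fun f _ => ?_
      have happ : (wordProd T (List.ofFn f) * (Δ * Δ) * adjoint (wordProd T (List.ofFn f))) h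
          = wordProd T (List.ofFn f) (Δ (Δ (adjoint (wordProd T (List.ofFn f)) h))) := rfl
      rw [happ, ← adjoint_inner_right, hdd, inner_self_eq_norm_sq]
    rw [← e2]
    simp [ContinuousLinearMap.sub_apply, inner_sub_left]
  -- positivity facts
  have hQpos : ∀ k, (Q k).IsPositive := by
    intro k
    simp only [hQ]
    refine Finset.sum_induction _ _ (fun a b ha hb => ha.add hb) isPositive_zero fun f _ => ?_
    simpa [ContinuousLinearMap.one_def, ContinuousLinearMap.mul_def] using (isPositive_one (E := H)).conj_adjoint (wordProd T (List.ofFn f))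
  have hmono : ∀ k, Q (k+1) ≤ Q k := by
    intro k
    rw [ContinuousLinearMap.le_def]
    have e1 : Q k - Q (k+1) = ∑ f : Fin k → Fin n,
        wordProd T (List.ofFn f) * (Δ * Δ) * adjoint (wordProd T (List.ofFn f)) := by
      rw [hQsucc k]
      simp only [hQ]
      rw [← Finset.sum_sub_distrib]
      refine Finset.sum_congr rfl fun f _ => ?_
      rw [hΔ]
      noncomm_ring
    rw [e1]
    refine Finset.sum_induction _ _ (fun a b ha hb => ha.add hb) isPositive_zero fun f _ => ?_
    have := hΔΔpos.conj_adjoint (wordProd T (List.ofFn f))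
    rwa [show wordProd T (List.ofFn f) ∘L (Δ * Δ) ∘L adjoint (wordProd T (List.ofFn f))
      = wordProd T (List.ofFn f) * (Δ * Δ) * adjoint (wordProd T (List.ofFn f)) from
      (mul_assoc _ _ _).symm] at this
  have hle1 : ∀ k, Q k ≤ 1 := by
    intro k
    induction k with
    | zero => rw [hQ0]
    | succ k ih => exact le_trans (hmono k) ih
  have hQnorm : ∀ k, ‖Q k‖ ≤ 1 := by
    intro k
    calc ‖Q k‖ ≤ ‖(1 : H →L[ℂ] H)‖ :=
          CStarAlgebra.norm_le_norm_of_nonneg_of_le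
            ((ContinuousLinearMap.nonneg_iff_isPositive _).2 (hQpos k)) (hle1 k)
      _ ≤ 1 := by rw [ContinuousLinearMap.one_def]; exact norm_id_le
  -- the series identity
  have hlim : ∀ h : H, Tendsto (fun N : ℕ => re ⟪Q N h, h⟫_ℂ) atTop
      (nhds (‖h‖ ^ 2 - ‖K h‖ ^ 2)) := by
    intro h
    have h2 : (0:ℝ) < (2 : ℝ≥0∞).toReal := by norm_num
    have h1 := lp.hasSum_norm h2 (K h)
    simp only [show ((2:ℝ≥0∞)).toReal = ((2:ℕ):ℝ) by norm_num, Real.rpow_natCast] at h1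
    have hcoord : ∀ l : List (Fin n),
        ‖(K h : lp (fun _ : List (Fin n) => _) 2) l‖ = ‖Δ (adjoint (wordProd T l) h)‖ := by
      intro l
      rw [Submodule.coe_norm, hK h l]
    simp only [hcoord] at h1
    have h3 := (Equiv.hasSum_iff (List.equivSigmaTuple (α := Fin n)).symm).mpr h1
    have h4 := h3.sigma (fun m => hasSum_fintype
      (fun f : Fin m → Fin n => ‖Δ (adjoint (wordProd T (List.ofFn f)) h)‖ ^ 2))
    rw [show (fun m : ℕ => ∑ f : Fin m → Fin n,
        ‖Δ (adjoint (wordProd T (List.ofFn f)) h)‖ ^ 2)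
      = fun m : ℕ => re ⟪Q m h, h⟫_ℂ - re ⟪Q (m+1) h, h⟫_ℂ from
      funext fun m => (hdiff h m).symm] at h4
    have h5 := h4.tendsto_sum_nat
    simp only [Finset.sum_range_sub' (fun m : ℕ => re ⟪Q m h, h⟫_ℂ)] at h5
    simp only [hQ0, ContinuousLinearMap.one_apply, inner_self_eq_norm_sq] at h5
    have h6 := (tendsto_const_nhds (x := ‖h‖ ^ 2) (f := atTop)).sub h5
    simpa using h6
  constructor
  · intro hpure
    refine AddMonoidHomClass.isometry_of_norm K fun h => ?_
    have hp : Tendsto (fun N : ℕ => Q N h) atTop (nhds 0) := hpure h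
    have h7 : Tendsto (fun N : ℕ => re ⟪Q N h, h⟫_ℂ) atTop (nhds 0) := by
      have hi := Filter.Tendsto.inner (𝕜 := ℂ) hp (tendsto_const_nhds (x := h))
      rw [inner_zero_left] at hi
      have := (RCLike.continuous_re.tendsto (0 : ℂ)).comp hi
      simpa [Function.comp_def] using this
    have := tendsto_nhds_unique (hlim h) h7
    have hsq : ‖K h‖ ^ 2 = ‖h‖ ^ 2 := by linarith
    rw [← Real.sqrt_sq (norm_nonneg (K h)), ← Real.sqrt_sq (norm_nonneg h), hsq]
  · intro hiso h
    have hn : ‖K h‖ = ‖h‖ := hiso.norm_map_of_map_zero (map_zero K) h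
    have h7 : Tendsto (fun N : ℕ => re ⟪Q N h, h⟫_ℂ) atTop (nhds 0) := by
      have := hlim h
      rw [hn, sub_self] at this
      exact this
    have hb : ∀ N, ‖Q N h‖ ^ 2 ≤ re ⟪Q N h, h⟫_ℂ := by
      intro N
      calc ‖Q N h‖ ^ 2 ≤ ‖Q N‖ * re ⟪Q N h, h⟫_ℂ := norm_sq_le_of_isPositive (hQpos N) h
        _ ≤ 1 * re ⟪Q N h, h⟫_ℂ :=
            mul_le_mul_of_nonneg_right (hQnorm N) ((hQpos N).re_inner_nonneg_left h)
        _ = re ⟪Q N h, h⟫_ℂ := one_mul _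
    have h8 : Tendsto (fun N : ℕ => ‖Q N h‖ ^ 2) atTop (nhds 0) :=
      squeeze_zero (fun N => by positivity) hb h7
    have h9 : Tendsto (fun N : ℕ => ‖Q N h‖) atTop (nhds 0) := by
      have h10 := (Real.continuous_sqrt.tendsto 0).comp h8
      rw [Real.sqrt_zero] at h10
      exact h10.congr fun N => by simp [Function.comp, Real.sqrt_sq (norm_nonneg _)]
    exact tendsto_zero_iff_norm_tendsto_zero.mpr h9

end Main
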